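/- Let τ and τ' be ℕ-valued random variables (hitting times under two policies π and π'). Set t = min{n : P(τ = n) > 0} and t' = min{n : P(τ' = n) > 0}, and assume t < t'. Let p = P(τ = t) > 0. If 0 < λ ≤ p^{1/(t'−t)}, then E[λ^τ]/(1-λ) ≥ E[λ^{τ'}]/(1-λ), i.e., the value function of π dominates that of π' at this initial state. -/

import Mathlib

open MeasureTheory

/-- Theorem 3.2 of the paper: if the minimal support point `t` of `τ` is strictly
smaller than the minimal support point `t'` of `τ'`, `p = P(τ = t) > 0`, and
`0 < λ ≤ p^{1/(t'-t)}`, then `E[λ^τ]/(1-λ) ≥ E[λ^{τ'}]/(1-λ)`. -/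
theorem small_discount_prefers_short_path
    {Ω : Type*} [MeasurableSpace Ω] (μ : Measure Ω) [IsProbabilityMeasure μ]
    (τ τ' : Ω → ℕ) (hτ : Measurable τ) (hτ' : Measurable τ')
    (t t' : ℕ) (htt' : t < t')
    (hτmin : ∀ n : ℕ, n < t → μ {ω | τ ω = n} = 0)
    (hτ'min : ∀ n : ℕ, n < t' → μ {ω | τ' ω = n} = 0)
    (p : ℝ) (hp : p = (μ {ω | τ ω = t}).toReal) (hppos : 0 < p)
    (lam : ℝ) (hlam0 : 0 < lam) (hlam1 : lam < 1)
    (hlam : lam ≤ p ^ ((1 : ℝ) / ((t' : ℝ) - (t : ℝ)))) :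
    (∫ ω, lam ^ (τ' ω) ∂μ) / (1 - lam) ≤ (∫ ω, lam ^ (τ ω) ∂μ) / (1 - lam) := by
  have h1lam : (0:ℝ) < 1 - lam := by linarith
  rw [div_le_div_iff_of_pos_right h1lam]
  -- measurability and integrability
  have hm : Measurable fun ω => lam ^ (τ ω) := measurable_const.pow hτ
  have hm' : Measurable fun ω => lam ^ (τ' ω) := measurable_const.pow hτ'
  have hint : Integrable (fun ω => lam ^ (τ ω)) μ := by
    refine (integrable_const (1:ℝ)).mono' hm.aestronglyMeasurable ?_
    filter_upwards with ω
    rw [Real.norm_eq_abs, abs_of_nonneg (pow_nonneg hlam0.le _)]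
    exact pow_le_one₀ hlam0.le hlam1.le
  have hint' : Integrable (fun ω => lam ^ (τ' ω)) μ := by
    refine (integrable_const (1:ℝ)).mono' hm'.aestronglyMeasurable ?_
    filter_upwards with ω
    rw [Real.norm_eq_abs, abs_of_nonneg (pow_nonneg hlam0.le _)]
    exact pow_le_one₀ hlam0.le hlam1.le
  -- upper bound for ∫ lam ^ τ'
  have hnull : μ {ω | τ' ω < t'} = 0 := by
    have hsub : {ω | τ' ω < t'} ⊆ ⋃ n : Fin t', {ω | τ' ω = n} := fun ω h =>
      Set.mem_iUnion.mpr ⟨⟨τ' ω, h⟩, rfl⟩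
    exact measure_mono_null hsub (measure_iUnion_null fun n => hτ'min n n.2)
  have hae : ∀ᵐ ω ∂μ, t' ≤ τ' ω := by
    rw [ae_iff]
    convert hnull using 2
    ext ω; simp [not_le]
  have hup : (∫ ω, lam ^ (τ' ω) ∂μ) ≤ lam ^ t' := by
    have : (∫ ω, lam ^ (τ' ω) ∂μ) ≤ ∫ _ω, lam ^ t' ∂μ := by
      refine integral_mono_ae hint' (integrable_const _) ?_
      filter_upwards [hae] with ω hω
      exact pow_le_pow_of_le_one hlam0.le hlam1.le hω
    simpa using this
  -- lower bound for ∫ lam ^ τ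
  have hmeas_set : MeasurableSet {ω | τ ω = t} := hτ (measurableSet_singleton t)
  have hlow : p * lam ^ t ≤ ∫ ω, lam ^ (τ ω) ∂μ := by
    have hind : (∫ ω, Set.indicator {ω | τ ω = t} (fun _ => lam ^ t) ω ∂μ)
        = (μ {ω | τ ω = t}).toReal * lam ^ t := by
      rw [integral_indicator_const _ hmeas_set]; simp [mul_comm, Measure.real]
    have hmono : (∫ ω, Set.indicator {ω | τ ω = t} (fun _ => lam ^ t) ω ∂μ)
        ≤ ∫ ω, lam ^ (τ ω) ∂μ := by
      refine integral_mono ((integrable_const _).indicator hmeas_set) hint ?_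
      intro ω
      by_cases h : τ ω = t
      · simp [Set.indicator_of_mem, h]
      · simp [Set.indicator_apply, h, pow_nonneg hlam0.le]
    rw [hp]
    calc (μ {ω | τ ω = t}).toReal * lam ^ t
        = ∫ ω, Set.indicator {ω | τ ω = t} (fun _ => lam ^ t) ω ∂μ := hind.symm
      _ ≤ _ := hmono
  -- key exponent inequality
  have hdpos : (0:ℝ) < (t':ℝ) - t := by
    have : (t:ℝ) < t' := by exact_mod_cast htt'
    linarith
  have hkey : lam ^ (t' - t) ≤ p := by
    calc lam ^ (t' - t) ≤ (p ^ ((1:ℝ)/((t':ℝ) - t))) ^ (t' - t) :=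
          pow_le_pow_left₀ hlam0.le hlam _
      _ = p := by
          rw [← Real.rpow_natCast (p ^ ((1:ℝ)/((t':ℝ) - t))) (t' - t),
            ← Real.rpow_mul hppos.le]
          have hc : ((t' - t : ℕ) : ℝ) = (t':ℝ) - t := by
            push_cast [Nat.cast_sub htt'.le]; ring
          rw [hc, one_div, inv_mul_cancel₀ hdpos.ne', Real.rpow_one]
  have hmid : lam ^ t' ≤ p * lam ^ t := by
    have : lam ^ t' = lam ^ t * lam ^ (t' - t) := by
      rw [← pow_add, Nat.add_sub_cancel' htt'.le]
    rw [this, mul_comm p _]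
    exact mul_le_mul_of_nonneg_left hkey (pow_nonneg hlam0.le _)
  linarith
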